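/- Let g(t) = t and h(t) = √((A_2 + B_2 t)(A_3 + B_3 t)) where A_2, A_3 > 0, B_2 < 0, and B_3 ∈ ℝ. Then on the set S = {t > 0 : A_2 + B_2 t > 0 and A_3 + B_3 t > 0}, the equation g(t) = h(t) has exactly one solution. -/

import Mathlib

/-- Uniqueness helper: two solutions with `s < t` give a contradiction. -/
lemma sqrt_fp_unique_aux (A2 A3 B2 B3 s t : ℝ)
    (hA2 : 0 < A2) (hA3 : 0 < A3)
    (hs : 0 < s) (hs2 : 0 < A2 + B2 * s) (hs3 : 0 < A3 + B3 * s)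
    (hseq : s ^ 2 = (A2 + B2 * s) * (A3 + B3 * s))
    (ht : 0 < t) (ht2 : 0 < A2 + B2 * t) (ht3 : 0 < A3 + B3 * t)
    (hteq : t ^ 2 = (A2 + B2 * t) * (A3 + B3 * t))
    (hst : s < t) : False := by
  have h1 : s * (A2 + B2 * t) < t * (A2 + B2 * s) := by nlinarith
  have h2 : s * (A3 + B3 * t) < t * (A3 + B3 * s) := by nlinarith
  have hp1 : 0 ≤ s * (A2 + B2 * t) := le_of_lt (mul_pos hs ht2)
  have hp2 : 0 ≤ s * (A3 + B3 * t) := le_of_lt (mul_pos hs ht3)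
  have := mul_lt_mul'' h1 h2 hp1 hp2
  nlinarith [this]

theorem sqrt_fixed_point_unique (A2 A3 B2 B3 : ℝ)
    (hA2 : 0 < A2) (hA3 : 0 < A3) (hB2 : B2 < 0) :
    ∃! t : ℝ,
      0 < t ∧ 0 < A2 + B2 * t ∧ 0 < A3 + B3 * t ∧
        t = Real.sqrt ((A2 + B2 * t) * (A3 + B3 * t)) := by
  have hB2ne : B2 ≠ 0 := ne_of_lt hB2
  set T2 : ℝ := -A2 / B2 with hT2def
  have hT2pos : 0 < T2 := div_pos_of_neg_of_neg (by linarith) hB2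
  have hT2zero : A2 + B2 * T2 = 0 := by rw [hT2def, mul_div_assoc', mul_neg, neg_div, mul_div_cancel_left₀ _ hB2ne]; ring
  -- choose T where one factor vanishes
  set T : ℝ := if 0 ≤ B3 then T2 else min T2 (-A3 / B3) with hTdef
  have hTpos : 0 < T := by
    rw [hTdef]; split
    · exact hT2pos
    · exact lt_min hT2pos (div_pos_of_neg_of_neg (by linarith) (by linarith))
  have hTle : T ≤ T2 := by
    rw [hTdef]; split
    · exact le_rfl
    · exact min_le_left _ _
  have hprod : (A2 + B2 * T) * (A3 + B3 * T) ≤ 0 := by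
    rw [hTdef]; split
    · rw [hT2zero]; ring_nf; simp
    · rename_i hB3
      push_neg at hB3
      have hB3ne : B3 ≠ 0 := ne_of_lt hB3
      rcases min_cases T2 (-A3 / B3) with ⟨hm, hle⟩ | ⟨hm, hle⟩
      · rw [hm, hT2zero, zero_mul]
      · rw [hm]
        have : A3 + B3 * (-A3 / B3) = 0 := by field_simp; ring
        rw [this, mul_zero]
  -- IVT for f t = t^2 - (A2+B2 t)(A3+B3 t)
  set f : ℝ → ℝ := fun t => t ^ 2 - (A2 + B2 * t) * (A3 + B3 * t) with hfdef
  have hf0 : f 0 < 0 := by simp [hfdef]; nlinarith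
  have hfT : 0 < f T := by
    have : 0 < T ^ 2 := by positivity
    simp only [hfdef]; nlinarith
  have hcont : ContinuousOn f (Set.Icc 0 T) := by
    apply Continuous.continuousOn
    simp only [hfdef]
    fun_prop
  have hmem : (0 : ℝ) ∈ Set.Ioo (f 0) (f T) := ⟨hf0, hfT⟩
  obtain ⟨t0, ht0mem, ht0⟩ := intermediate_value_Ioo (le_of_lt hTpos) hcont hmem
  obtain ⟨ht0pos, ht0lt⟩ := ht0mem
  have hfact2 : 0 < A2 + B2 * t0 := by
    have h1 : t0 < A2 / (-B2) := by
      have : T2 = A2 / (-B2) := by rw [hT2def, neg_div, div_neg]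
      linarith [lt_of_lt_of_le ht0lt hTle, this ▸ (lt_of_lt_of_le ht0lt hTle)]
    have h2 : t0 * (-B2) < A2 := (lt_div_iff₀ (by linarith)).mp h1
    nlinarith
  have heq : (A2 + B2 * t0) * (A3 + B3 * t0) = t0 ^ 2 := by
    simp only [hfdef] at ht0; linarith
  have hfact3 : 0 < A3 + B3 * t0 := by
    by_contra h
    push_neg at h
    nlinarith [mul_nonpos_of_nonneg_of_nonpos (le_of_lt hfact2) h]
  refine ⟨t0, ⟨ht0pos, hfact2, hfact3, ?_⟩, ?_⟩
  · rw [heq, Real.sqrt_sq (le_of_lt ht0pos)]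
  · rintro y ⟨hy0, hy2, hy3, hyeq⟩
    have hysq : y ^ 2 = (A2 + B2 * y) * (A3 + B3 * y) := by
      nth_rewrite 1 [hyeq]
      exact Real.sq_sqrt (le_of_lt (mul_pos hy2 hy3))
    have h0sq : t0 ^ 2 = (A2 + B2 * t0) * (A3 + B3 * t0) := heq.symm
    rcases lt_trichotomy y t0 with h | h | h
    · exact absurd (sqrt_fp_unique_aux A2 A3 B2 B3 y t0 hA2 hA3 hy0 hy2 hy3 hysq
        ht0pos hfact2 hfact3 h0sq h) (fun x => x)
    · exact h
    · exact absurd (sqrt_fp_unique_aux A2 A3 B2 B3 t0 y hA2 hA3 ht0pos hfact2 hfact3 h0sq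
        hy0 hy2 hy3 hysq h) (fun x => x)
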